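/- Let $\mu \in \mathbb{R}$, $a > 0$. The function $T \mapsto \int_{\mathbb{R}} \frac{\tanh((p^2-\mu)/(2T))}{p^2 - \mu}\,\frac{dp}{2\pi}$ is strictly decreasing on $(0,\infty)$, tends to $0$ as $T \to \infty$, and hence the equation $\frac{1}{a} = \int_{\mathbb{R}} \frac{\tanh((p^2-\mu)/(2T))}{p^2-\mu}\,\frac{dp}{2\pi}$ has at most one solution $T_c \in (0,\infty)$. -/

import Mathlib

open MeasureTheory Real Set

noncomputable def bcsIntegral (μ : ℝ) (T : ℝ) : ℝ :=
  ∫ p : ℝ, (if p^2 = μ then 1 / (2 * T)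
    else Real.tanh ((p^2 - μ) / (2 * T)) / (p^2 - μ)) / (2 * Real.pi)

/-! ### auxiliary lemmas -/

noncomputable def Fint (μ T : ℝ) (p : ℝ) : ℝ :=
  if p^2 = μ then 1 / (2 * T) else Real.tanh ((p^2 - μ) / (2 * T)) / (p^2 - μ)

lemma bcs_eq (μ T : ℝ) : bcsIntegral μ T = (∫ p : ℝ, Fint μ T p) / (2 * Real.pi) := by
  rw [bcsIntegral, MeasureTheory.integral_div]; rfl

lemma tanh_strictMono : StrictMono Real.tanh := by
  intro x y h
  rw [Real.tanh_eq_sinh_div_cosh, Real.tanh_eq_sinh_div_cosh,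
    div_lt_div_iff₀ (Real.cosh_pos x) (Real.cosh_pos y)]
  have h1 := Real.sinh_sub x y
  have h2 : Real.sinh (x - y) < 0 := by rw [Real.sinh_neg_iff]; linarith
  linarith

lemma tanh_pos' {x : ℝ} (hx : 0 < x) : 0 < Real.tanh x := by
  have := tanh_strictMono hx
  rwa [Real.tanh_zero] at this

lemma tanh_lt_one' (x : ℝ) : Real.tanh x < 1 := by
  rw [Real.tanh_eq_sinh_div_cosh, div_lt_one (Real.cosh_pos x)]
  exact Real.sinh_lt_cosh x

lemma tanh_le_self {x : ℝ} (hx : 0 ≤ x) : Real.tanh x ≤ x := by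
  have key : Real.sinh x ≤ x * Real.cosh x := by
    have hmono : MonotoneOn (fun t : ℝ => t * Real.cosh t - Real.sinh t) (Ici 0) := by
      apply monotoneOn_of_deriv_nonneg (convex_Ici 0)
      · exact ((continuous_id.mul Real.continuous_cosh).sub Real.continuous_sinh).continuousOn
      · exact fun t ht => (((differentiable_id.mul Real.differentiable_cosh).sub
          Real.differentiable_sinh) t).differentiableWithinAt
      · intro t ht
        rw [interior_Ici, mem_Ioi] at ht
        have hd : HasDerivAt (fun t : ℝ => t * Real.cosh t - Real.sinh t)
            (1 * Real.cosh t + t * Real.sinh t - Real.cosh t) t :=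
          ((hasDerivAt_id t).mul (Real.hasDerivAt_cosh t)).sub (Real.hasDerivAt_sinh t)
        rw [hd.deriv]
        have : 0 < Real.sinh t := Real.sinh_pos_iff.mpr ht
        nlinarith
    have h0 := hmono (self_mem_Ici) hx hx
    simp only [Real.cosh_zero, Real.sinh_zero, mul_one, zero_mul, sub_zero] at h0
    linarith
  rw [Real.tanh_eq_sinh_div_cosh, div_le_iff₀ (Real.cosh_pos x)]
  exact key

/-- core bounds for positive `s` -/
lemma aux_bounds_pos {T s : ℝ} (hT : 0 < T) (hs : 0 < s) :
    0 < Real.tanh (s / (2 * T)) / s ∧ Real.tanh (s / (2 * T)) / s ≤ 1 / (2 * T) ∧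
      Real.tanh (s / (2 * T)) / s ≤ 1 / s := by
  have hx : 0 < s / (2 * T) := by positivity
  have h1 : 0 < Real.tanh (s / (2 * T)) := tanh_pos' hx
  refine ⟨by positivity, ?_, ?_⟩
  · have h2 : Real.tanh (s / (2 * T)) ≤ s / (2 * T) := tanh_le_self hx.le
    rw [div_le_div_iff₀ hs (by positivity)]
    calc Real.tanh (s / (2 * T)) * (2 * T) ≤ (s / (2 * T)) * (2 * T) := by
          apply mul_le_mul_of_nonneg_right h2 (by positivity)
      _ = s := by field_simp
      _ = 1 * s := (one_mul s).symm
  · gcongr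
    exact (tanh_lt_one' _).le

lemma Fint_neg_case {T s : ℝ} (hT : 0 < T) (hs : s ≠ 0) :
    Real.tanh (s / (2 * T)) / s = Real.tanh (|s| / (2 * T)) / |s| := by
  rcases hs.lt_or_gt with h | h
  · rw [abs_of_neg h, neg_div, Real.tanh_neg, neg_div_neg_eq]
  · rw [abs_of_pos h]

lemma Fint_pos {μ T : ℝ} (hT : 0 < T) (p : ℝ) : 0 < Fint μ T p := by
  rw [Fint]
  split_ifs with h
  · positivity
  · have hs : p^2 - μ ≠ 0 := sub_ne_zero.mpr h
    rw [Fint_neg_case hT hs]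
    exact (aux_bounds_pos hT (abs_pos.mpr hs)).1

lemma Fint_le {μ T : ℝ} (hT : 0 < T) (p : ℝ) : Fint μ T p ≤ 1 / (2 * T) := by
  rw [Fint]
  split_ifs with h
  · exact le_refl _
  · have hs : p^2 - μ ≠ 0 := sub_ne_zero.mpr h
    rw [Fint_neg_case hT hs]
    exact (aux_bounds_pos hT (abs_pos.mpr hs)).2.1

lemma Fint_measurable (μ T : ℝ) : Measurable (Fint μ T) := by
  unfold Fint
  refine Measurable.ite ?_ measurable_const ?_
  · exact measurableSet_eq_fun (by fun_prop) measurable_const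
  · have htanh : Measurable Real.tanh := by
      have he : Real.tanh = fun x => Real.sinh x / Real.cosh x :=
        funext Real.tanh_eq_sinh_div_cosh
      rw [he]
      exact Real.continuous_sinh.measurable.div Real.continuous_cosh.measurable
    exact (htanh.comp (by fun_prop)).div (by fun_prop)

lemma Fint_tail {μ T : ℝ} (hT : 0 < T) {p : ℝ} (hp : 2 * |μ| + 2 ≤ p^2) :
    Fint μ T p ≤ 2 / p^2 := by
  have hs : 0 < p^2 - μ := by
    have := abs_le.mp (le_refl |μ|)
    nlinarith [neg_abs_le μ, le_abs_self μ]
  have hμ : p^2 ≠ μ := by intro h; rw [h] at hs; linarith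
  rw [Fint, if_neg hμ]
  have h1 : Real.tanh ((p^2 - μ) / (2 * T)) / (p^2 - μ) ≤ 1 / (p^2 - μ) := by
    gcongr
    exact (tanh_lt_one' _).le
  have h2 : 1 / (p^2 - μ) ≤ 2 / p^2 := by
    rw [div_le_div_iff₀ hs (by nlinarith [abs_nonneg μ])]
    nlinarith [neg_abs_le μ, le_abs_self μ]
  linarith

/-- generic integrability criterion -/
lemma integrable_aux {f : ℝ → ℝ} (hf : Measurable f) (c R : ℝ) (hR : 0 < R)
    (h1 : ∀ p, |f p| ≤ c) (h2 : ∀ p, R ≤ |p| → |f p| ≤ 2 / p^2) :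
    Integrable f := by
  have hrpow : IntegrableOn (fun x : ℝ => 2 * x ^ (-2 : ℝ)) (Ioi R) :=
    (integrableOn_Ioi_rpow_of_lt (show (-2:ℝ) < -1 by norm_num) hR).const_mul 2
  have hIoi : IntegrableOn f (Ioi R) := by
    refine Integrable.mono' hrpow (hf.aestronglyMeasurable.restrict) ?_
    filter_upwards [ae_restrict_mem measurableSet_Ioi] with x hx
    rw [mem_Ioi] at hx
    have hx0 : 0 < x := hR.trans hx
    have := h2 x (by rw [abs_of_pos hx0]; exact hx.le)
    rw [Real.norm_eq_abs]
    calc |f x| ≤ 2 / x^2 := this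
      _ = 2 * x ^ (-2 : ℝ) := by
          rw [Real.rpow_neg hx0.le, ← Real.rpow_natCast x 2]
          norm_num [div_eq_mul_inv]
  have hIio : IntegrableOn f (Iio (-R)) := by
    have hcomp : IntegrableOn (fun x => f (-x)) (Ioi R) := by
      refine Integrable.mono' hrpow ((hf.comp measurable_neg).aestronglyMeasurable.restrict) ?_
      filter_upwards [ae_restrict_mem measurableSet_Ioi] with x hx
      rw [mem_Ioi] at hx
      have hx0 : 0 < x := hR.trans hx
      have := h2 (-x) (by rw [abs_neg, abs_of_pos hx0]; exact hx.le)
      rw [Real.norm_eq_abs]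
      calc |f (-x)| ≤ 2 / (-x)^2 := this
        _ = 2 / x^2 := by rw [neg_pow]; norm_num
        _ = 2 * x ^ (-2 : ℝ) := by
            rw [Real.rpow_neg hx0.le, ← Real.rpow_natCast x 2]
            norm_num [div_eq_mul_inv]
    have e : Measure.map (⇑(MeasurableEquiv.neg ℝ)) volume = volume := by
      simpa [MeasurableEquiv.neg] using MeasureTheory.Measure.map_neg_eq_self (volume : Measure ℝ)
    have hiff := (integrableOn_map_equiv (MeasurableEquiv.neg ℝ) (f := f)
      (μ := volume) (s := Set.Iio (-R)))
    rw [e] at hiff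
    rw [hiff]
    have hs : (⇑(MeasurableEquiv.neg ℝ) ⁻¹' Set.Iio (-R)) = Set.Ioi R := by
      ext x; simp [MeasurableEquiv.neg]
    rw [hs]
    exact hcomp
  have hIcc : IntegrableOn f (Icc (-R) R) := by
    refine Integrable.mono' ((integrableOn_const (C := c) (hs := measure_Icc_lt_top.ne)))
      (hf.aestronglyMeasurable.restrict) ?_
    filter_upwards with x
    rw [Real.norm_eq_abs]
    exact h1 x
  have : IntegrableOn f (Iio (-R) ∪ (Icc (-R) R ∪ Ioi R)) :=
    hIio.union (hIcc.union hIoi)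
  rw [← integrableOn_univ]
  refine this.mono_set ?_
  intro x _
  rcases lt_trichotomy x (-R) with h | h | h
  · exact Or.inl h
  · exact Or.inr (Or.inl ⟨le_of_eq h.symm, by linarith⟩)
  · rcases le_or_gt x R with h' | h'
    · exact Or.inr (Or.inl ⟨h.le, h'⟩)
    · exact Or.inr (Or.inr h')

lemma Fint_integrable {μ T : ℝ} (hT : 0 < T) : Integrable (Fint μ T) := by
  refine integrable_aux (Fint_measurable μ T) (1 / (2 * T)) (Real.sqrt (2 * |μ| + 2))
    (Real.sqrt_pos.mpr (by positivity)) ?_ ?_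
  · intro p
    rw [abs_of_pos (Fint_pos hT p)]
    exact Fint_le hT p
  · intro p hp
    rw [abs_of_pos (Fint_pos hT p)]
    apply Fint_tail hT
    calc 2 * |μ| + 2 = Real.sqrt (2 * |μ| + 2) ^ 2 := by
          rw [Real.sq_sqrt (by positivity)]
      _ ≤ |p| ^ 2 := by gcongr
      _ = p ^ 2 := sq_abs p

lemma Fint_strict_mono {μ T₁ T₂ : ℝ} (h1 : 0 < T₁) (h12 : T₁ < T₂) (p : ℝ) :
    Fint μ T₂ p < Fint μ T₁ p := by
  have h2 : 0 < T₂ := h1.trans h12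
  unfold Fint
  split_ifs with h
  · apply div_lt_div_of_pos_left one_pos (by linarith) (by linarith)
  · set s := p^2 - μ with hs_def
    have hs : s ≠ 0 := sub_ne_zero.mpr h
    rcases hs.lt_or_gt with hneg | hpos
    · have harg : s / (2 * T₁) < s / (2 * T₂) := by
        rw [div_lt_div_iff₀ (by linarith) (by linarith)]
        nlinarith
      have ht := tanh_strictMono harg
      have hinv : s⁻¹ < 0 := inv_neg''.mpr hneg
      rw [div_eq_mul_inv, div_eq_mul_inv]
      exact mul_lt_mul_of_neg_right ht hinv
    · have harg : s / (2 * T₂) < s / (2 * T₁) := by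
        rw [div_lt_div_iff₀ (by linarith) (by linarith)]
        nlinarith
      exact div_lt_div_of_pos_right (tanh_strictMono harg) hpos

lemma bcs_strictAntiOn (μ : ℝ) : StrictAntiOn (bcsIntegral μ) (Set.Ioi 0) := by
  intro T₁ hT₁ T₂ hT₂ h12
  rw [mem_Ioi] at hT₁ hT₂
  rw [bcs_eq, bcs_eq]
  have key : 0 < ∫ p : ℝ, (Fint μ T₁ p - Fint μ T₂ p) := by
    have hint : Integrable (fun p => Fint μ T₁ p - Fint μ T₂ p) :=
      (Fint_integrable hT₁).sub (Fint_integrable hT₂)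
    rw [integral_pos_iff_support_of_nonneg]
    · have : Function.support (fun p => Fint μ T₁ p - Fint μ T₂ p) = Set.univ := by
        ext p
        simp only [Function.mem_support, mem_univ, iff_true]
        have := Fint_strict_mono (μ := μ) hT₁ h12 p
        intro hc
        rw [sub_eq_zero] at hc
        linarith
      rw [this]
      simp
    · intro p
      have := Fint_strict_mono (μ := μ) hT₁ h12 p
      simp only [Pi.zero_apply]
      linarith
    · exact hint
  rw [integral_sub (Fint_integrable hT₁) (Fint_integrable hT₂)] at key
  have hpi : (0:ℝ) < 2 * Real.pi := by positivity
  apply div_lt_div_of_pos_right _ hpi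
  linarith

lemma bcs_tendsto (μ : ℝ) :
    Filter.Tendsto (bcsIntegral μ) Filter.atTop (nhds 0) := by
  have h0 : (0:ℝ) = 0 / (2 * Real.pi) := by simp
  have key : Filter.Tendsto (fun T => ∫ p : ℝ, Fint μ T p) Filter.atTop (nhds 0) := by
    have := MeasureTheory.tendsto_integral_filter_of_dominated_convergence
      (μ := (volume : Measure ℝ)) (F := fun T : ℝ => Fint μ T) (f := fun _ : ℝ => (0:ℝ))
      (l := Filter.atTop)
      (bound := fun p => if 2 * |μ| + 2 ≤ p^2 then 2 / p^2 else 1/2)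
      ?_ ?_ ?_ ?_
    · simpa using this
    · filter_upwards [Filter.eventually_gt_atTop 0] with T hT
      exact (Fint_measurable μ T).aestronglyMeasurable
    · filter_upwards [Filter.eventually_ge_atTop 1] with T hT
      filter_upwards with p
      have hT0 : (0:ℝ) < T := by linarith
      rw [Real.norm_eq_abs, abs_of_pos (Fint_pos hT0 p)]
      split_ifs with h
      · exact Fint_tail hT0 h
      · calc Fint μ T p ≤ 1 / (2 * T) := Fint_le hT0 p
          _ ≤ 1 / 2 := by
            rw [div_le_div_iff₀ (by linarith) (by norm_num)]
            linarith
    · -- integrability of the bound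
      refine integrable_aux ?_ (1/2 + 1) (Real.sqrt (2 * |μ| + 2))
        (Real.sqrt_pos.mpr (by positivity)) ?_ ?_
      · refine Measurable.ite ?_ (by fun_prop) measurable_const
        exact measurableSet_le measurable_const (by fun_prop)
      · intro p
        split_ifs with h
        · have hp2 : (0:ℝ) < p^2 := by nlinarith [abs_nonneg μ]
          rw [abs_of_pos (by positivity)]
          rw [div_le_iff₀ hp2]
          nlinarith [abs_nonneg μ]
        · rw [abs_of_pos (by norm_num)]
          norm_num
      · intro p hp
        have hp2 : 2 * |μ| + 2 ≤ p^2 := by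
          calc 2 * |μ| + 2 = Real.sqrt (2 * |μ| + 2) ^ 2 := by
                rw [Real.sq_sqrt (by positivity)]
            _ ≤ |p| ^ 2 := by gcongr
            _ = p ^ 2 := sq_abs p
        rw [if_pos hp2]
        have hp0 : (0:ℝ) < p^2 := by nlinarith [abs_nonneg μ]
        rw [abs_of_pos (by positivity)]
    · filter_upwards with p
      -- pointwise limit : Fint μ T p → 0 as T → ∞
      have hbound : Filter.Tendsto (fun T : ℝ => 1 / (2 * T)) Filter.atTop (nhds 0) := by
        exact Filter.Tendsto.div_atTop tendsto_const_nhds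
          (Filter.Tendsto.const_mul_atTop two_pos Filter.tendsto_id)
      apply squeeze_zero' (g := fun T : ℝ => 1 / (2 * T))
      · filter_upwards [Filter.eventually_gt_atTop 0] with T hT
        exact (Fint_pos hT p).le
      · filter_upwards [Filter.eventually_gt_atTop 0] with T hT
        exact Fint_le hT p
      · exact hbound
  rw [h0]
  have : bcsIntegral μ = fun T => (∫ p : ℝ, Fint μ T p) / (2 * Real.pi) :=
    funext fun T => bcs_eq μ T
  rw [this]
  exact key.div_const _

theorem stmt_13 (μ a : ℝ) (ha : 0 < a) :
    StrictAntiOn (bcsIntegral μ) (Set.Ioi 0) ∧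
    Filter.Tendsto (bcsIntegral μ) Filter.atTop (nhds 0) ∧
    ∀ T₁ ∈ Set.Ioi (0:ℝ), ∀ T₂ ∈ Set.Ioi (0:ℝ),
      bcsIntegral μ T₁ = 1 / a → bcsIntegral μ T₂ = 1 / a → T₁ = T₂ := by
  refine ⟨bcs_strictAntiOn μ, bcs_tendsto μ, ?_⟩
  intro T₁ hT₁ T₂ hT₂ h1 h2
  exact (bcs_strictAntiOn μ).injOn hT₁ hT₂ (by rw [h1, h2])
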